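/- Let n be a nonnegative integer and let a, c be complex numbers with (a)_n ≠ 0, (c)_n ≠ 0, and (2c−a−n−1)_n ≠ 0. Then _3F_2(−n, a/2, (a+1)/2 ; a, c ; 4) = (−1)^n · _3F_2(−n, (2c−a−n−1)/2, (2c−a−n)/2 ; 2c−a−n−1, c ; 4), both sides being finite sums over k from 0 to n. -/

import Mathlib

open Finset

/-- The rising factorial (Pochhammer symbol) `(a)_k = a(a+1)⋯(a+k-1)`. -/
noncomputable def poch (a : ℂ) (k : ℕ) : ℂ := ∏ i ∈ Finset.range k, (a + i)

lemma poch_zero (a : ℂ) : poch a 0 = 1 := by simp [poch]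

lemma poch_succ (a : ℂ) (k : ℕ) : poch a (k+1) = poch a k * (a + k) := by
  simp [poch, Finset.prod_range_succ]

lemma poch_succ' (a : ℂ) (k : ℕ) : poch a (k+1) = a * poch (a+1) k := by
  rw [poch, Finset.prod_range_succ']
  simp only [Nat.cast_zero, add_zero]
  rw [mul_comm]
  congr 1
  · apply Finset.prod_congr rfl
    intro i _
    push_cast [poch]; ring

lemma poch_add (a : ℂ) (m k : ℕ) : poch a (m+k) = poch a m * poch (a+m) k := by
  simp [poch, Finset.prod_range_add, add_assoc]

lemma poch_diff (x : ℂ) (s : ℕ) :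
    poch x (s+1) - poch (x+1) (s+1) = -(s+1) * poch (x+1) s := by
  rw [poch_succ' x s, poch_succ (x+1) s]; push_cast; ring

lemma poch_reflect (x : ℂ) (m : ℕ) : poch x m = (-1)^m * poch (-x - m + 1) m := by
  rw [poch, poch, ← Finset.prod_range_reflect]
  rw [show ((-1 : ℂ))^m = ∏ _i ∈ Finset.range m, (-1 : ℂ) by simp, ← Finset.prod_mul_distrib]
  apply Finset.prod_congr rfl
  intro i hi
  simp only [Finset.mem_range] at hi
  have : (↑(m - 1 - i) : ℂ) = (m : ℂ) - 1 - i := by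
    have : m - 1 - i = m - (1 + i) := by omega
    rw [this, Nat.cast_sub (by omega)]; push_cast; ring
  rw [this]; ring

lemma poch_ne_zero_of_le {x : ℂ} {n : ℕ} (h : poch x n ≠ 0) {k : ℕ} (hk : k ≤ n) :
    poch x k ≠ 0 := by
  obtain ⟨m, rfl⟩ := Nat.exists_eq_add_of_le hk
  rw [poch_add] at h
  exact left_ne_zero_of_mul h

lemma poch_dup (x : ℂ) (k : ℕ) :
    poch (x/2) k * poch ((x+1)/2) k * 4^k = poch x (2*k) := by
  induction k with
  | zero => simp [poch_zero]
  | succ k ih =>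
    have h2 : 2*(k+1) = (2*k) + 1 + 1 := by ring
    rw [h2, poch_succ, poch_succ, poch_succ, poch_succ, ← ih]
    push_cast; ring

lemma poch_neg_nat (n k : ℕ) (hk : k ≤ n) :
    poch (-(n:ℂ)) k = (-1)^k * (Nat.factorial k : ℂ) * (n.choose k : ℂ) := by
  induction k with
  | zero => simp [poch_zero]
  | succ k ih =>
    have hk' : k ≤ n := by omega
    rw [poch_succ, ih hk']
    have hch : ((n.choose (k+1) : ℂ)) * (k+1) = (n.choose k : ℂ) * ((n:ℂ) - k) := by
      have := Nat.choose_succ_right_eq n k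
      have hcast : ((n.choose (k+1) * (k+1) : ℕ) : ℂ) = ((n.choose k * (n - k) : ℕ) : ℂ) := by
        rw [this]
      push_cast [Nat.cast_sub hk'] at hcast
      push_cast
      linear_combination hcast
    have hfac : (Nat.factorial (k+1) : ℂ) = (k+1) * (Nat.factorial k : ℂ) := by
      push_cast [Nat.factorial_succ]; ring
    rw [hfac]
    push_cast
    linear_combination ((-1:ℂ))^k * (Nat.factorial k : ℂ) * hch

noncomputable def Tsum (n : ℕ) (a c : ℂ) : ℂ :=
  ∑ k ∈ Finset.range (n+1),
    (-1)^k * (n.choose k : ℂ) * poch (a + k) k * poch (c + k) (n - k)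

lemma Tsum_zero (a c : ℂ) : Tsum 0 a c = 1 := by simp [Tsum, poch_zero]

lemma Tsum_R2 (m : ℕ) (a c : ℂ) :
    Tsum (m+1) a c - Tsum (m+1) a (c+1) = -((m:ℂ)+1) * Tsum m a (c+1) := by
  rw [Tsum, Tsum, Tsum, ← Finset.sum_sub_distrib, Finset.sum_range_succ]
  rw [show m + 1 - (m + 1) = 0 from Nat.sub_self _]
  simp only [Nat.sub_self, poch_zero, mul_one]
  rw [sub_self, add_zero, Finset.mul_sum]
  apply Finset.sum_congr rfl
  intro k hk
  simp only [Finset.mem_range] at hk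
  have hk' : k ≤ m := by omega
  have h1 : m + 1 - k = (m - k) + 1 := by omega
  have hc1 : c + 1 + (k:ℂ) = (c + k) + 1 := by ring
  rw [h1, hc1]
  have hcast : ((m - k : ℕ) : ℂ) = (m:ℂ) - k := Nat.cast_sub hk'
  have hd := poch_diff (c + (k:ℂ)) (m - k)
  rw [hcast] at hd
  have hch : (((m+1).choose k : ℕ) : ℂ) * ((m:ℂ) + 1 - k) = ((m:ℂ)+1) * ((m.choose k : ℕ) : ℂ) := by
    have h := Nat.choose_mul_succ_eq m k
    have hcast2 : ((m.choose k * (m + 1) : ℕ) : ℂ) = (((m+1).choose k * (m + 1 - k) : ℕ) : ℂ) := by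
      rw [h]
    rw [Nat.cast_mul, Nat.cast_mul, Nat.cast_sub (by omega : k ≤ m + 1)] at hcast2
    push_cast at hcast2 ⊢
    linear_combination -hcast2
  linear_combination ((-1:ℂ))^k * (((m+1).choose k : ℕ) : ℂ) * poch (a+(k:ℂ)) k * hd
    - ((-1:ℂ))^k * poch (a+(k:ℂ)) k * poch (c+(k:ℂ)+1) (m-k) * hch

lemma Tsum_R1 (m : ℕ) (a c : ℂ) :
    Tsum (m+1) a c - Tsum (m+1) (a+1) c = ((m:ℂ)+1) * Tsum m (a+2) (c+1) := by
  rw [Tsum, Tsum, Tsum, ← Finset.sum_sub_distrib, Finset.mul_sum, Finset.sum_range_succ']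
  rw [show ((-1:ℂ))^0 * (((m+1).choose 0 : ℕ) : ℂ) * poch (a + (0:ℕ)) 0 * poch (c + (0:ℕ)) (m+1-0) -
      (-1)^0 * (((m+1).choose 0 : ℕ) : ℂ) * poch (a + 1 + (0:ℕ)) 0 * poch (c + (0:ℕ)) (m+1-0) = 0 by
    simp [poch_zero]]
  rw [add_zero]
  apply Finset.sum_congr rfl
  intro k hk
  simp only [Finset.mem_range] at hk
  have h1 : m + 1 - (k + 1) = m - k := by omega
  rw [h1]
  have hd := poch_diff (a + ((k+1:ℕ):ℂ)) k
  have e1 : a + ((k+1:ℕ):ℂ) + 1 = (a + 2) + (k:ℂ) := by push_cast; ring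
  have e2 : c + ((k+1:ℕ):ℂ) = (c + 1) + (k:ℂ) := by push_cast; ring
  rw [e1] at hd
  have e1' : a + 1 + ((k+1:ℕ):ℂ) = (a + 2) + (k:ℂ) := by push_cast; ring
  rw [e1', e2]
  have hch : (((m+1).choose (k+1) : ℕ) : ℂ) * ((k:ℂ) + 1) = ((m:ℂ)+1) * ((m.choose k : ℕ) : ℂ) := by
    have h := Nat.add_one_mul_choose_eq m k
    have hcast2 : ((Nat.succ m * m.choose k : ℕ) : ℂ) = (((m+1).choose (k+1) * (k+1) : ℕ) : ℂ) := by
      rw [h]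
    push_cast at hcast2 ⊢
    linear_combination -hcast2
  linear_combination ((-1:ℂ))^(k+1) * (((m+1).choose (k+1) : ℕ) : ℂ) * poch ((c+1) + (k:ℂ)) (m-k) * hd
    + ((-1:ℂ))^k * poch ((a+2) + (k:ℂ)) k * poch ((c+1) + (k:ℂ)) (m-k) * hch

lemma Tsum_collapse (n : ℕ) (a : ℂ) :
    Tsum n a (1 - n) = (-1)^n * poch (a + n) n := by
  rw [Tsum, Finset.sum_range_succ]
  rw [Nat.sub_self, poch_zero, Nat.choose_self]
  have hz : ∀ k ∈ Finset.range n,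
      (-1)^k * ((n.choose k : ℕ) : ℂ) * poch (a + k) k * poch ((1 - (n:ℂ)) + k) (n - k) = 0 := by
    intro k hk
    simp only [Finset.mem_range] at hk
    have : poch ((1 - (n:ℂ)) + k) (n - k) = 0 := by
      rw [poch]
      apply Finset.prod_eq_zero (Finset.mem_range.mpr (show n - k - 1 < n - k by omega))
      have : ((n - k - 1 : ℕ) : ℂ) = (n:ℂ) - k - 1 := by
        rw [Nat.cast_sub (by omega : 1 ≤ n - k), Nat.cast_sub (by omega : k ≤ n)]
        norm_num
      rw [this]; ring
    rw [this, mul_zero]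
  rw [Finset.sum_eq_zero hz, zero_add]
  push_cast
  ring

noncomputable def Rsum (n : ℕ) (a c : ℂ) : ℂ := (-1)^n * Tsum n (2*c - a - n - 1) c

lemma Rsum_zero (a c : ℂ) : Rsum 0 a c = 1 := by simp [Rsum, Tsum_zero]

lemma Rsum_R2 (m : ℕ) (a c : ℂ) :
    Rsum (m+1) a c - Rsum (m+1) a (c+1) = -((m:ℂ)+1) * Rsum m a (c+1) := by
  rw [Rsum, Rsum, Rsum]
  set b : ℂ := 2*c - a - ((m+1:ℕ):ℂ) - 1 with hb
  have hb2 : 2*(c+1) - a - ((m+1:ℕ):ℂ) - 1 = b + 2 := by rw [hb]; ring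
  have hb3 : 2*(c+1) - a - ((m:ℕ):ℂ) - 1 = b + 3 := by rw [hb]; push_cast; ring
  rw [hb2, hb3]
  have key : Tsum (m+1) b c - Tsum (m+1) (b+2) (c+1) = ((m:ℂ)+1) * Tsum m (b+3) (c+1) := by
    have h1 := Tsum_R1 m b c            -- T b c - T (b+1) c = (m+1) T m (b+2) (c+1)
    have h2 := Tsum_R1 m (b+1) c        -- T (b+1) c - T (b+2) c = (m+1) T m (b+3) (c+1)
    have h3 := Tsum_R2 m (b+2) c        -- T (b+2) c - T (b+2) (c+1) = -(m+1) T m (b+2) (c+1)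
    have e1 : b + 1 + 2 = b + 3 := by ring
    have e2 : b + 2 + 2 = b + 2 + 2 := rfl
    have e3 : b + 1 + 1 = b + 2 := by ring
    rw [e1, e3] at h2
    linear_combination h1 + h2 + h3
  have hpow : ((-1:ℂ))^(m+1) = -(-1:ℂ)^m := by ring
  calc (-1:ℂ)^(m+1) * Tsum (m+1) b c - (-1:ℂ)^(m+1) * Tsum (m+1) (b+2) (c+1)
      = (-1:ℂ)^(m+1) * (Tsum (m+1) b c - Tsum (m+1) (b+2) (c+1)) := by ring
    _ = (-1:ℂ)^(m+1) * (((m:ℂ)+1) * Tsum m (b+3) (c+1)) := by rw [key]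
    _ = -((m:ℂ)+1) * ((-1:ℂ)^m * Tsum m (b+3) (c+1)) := by rw [hpow]; ring

lemma Rsum_collapse (n : ℕ) (a : ℂ) :
    Rsum n a (1 - n) = (-1)^n * poch (a + n) n := by
  rw [Rsum, Tsum_collapse]
  have e : 2*(1 - (n:ℂ)) - a - n - 1 + n = 1 - 2*n - a := by ring
  rw [e]
  have href := poch_reflect (1 - 2*(n:ℂ) - a) n
  have e2 : -(1 - 2*(n:ℂ) - a) - n + 1 = a + n := by ring
  rw [e2] at href
  rw [href]
  have hsq : ((-1:ℂ))^n * ((-1:ℂ))^n = 1 := by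
    rw [← pow_add]
    exact (neg_one_pow_eq_one_iff_even (by norm_num)).2 ⟨n, by ring⟩
  linear_combination ((-1:ℂ))^n * poch (a + (n:ℂ)) n * hsq

open Polynomial in
lemma poly_periodic_const (p : Polynomial ℂ) (h : ∀ c : ℂ, p.eval (c+1) = p.eval c) :
    ∀ c c' : ℂ, p.eval c = p.eval c' := by
  have hnat : ∀ m : ℕ, p.eval (m : ℂ) = p.eval 0 := by
    intro m
    induction m with
    | zero => simp
    | succ m ih => push_cast; rw [h (m : ℂ)]; exact ih
  have hq : p - C (p.eval 0) = 0 := by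
    apply Polynomial.eq_zero_of_infinite_isRoot
    apply Set.infinite_of_injective_forall_mem (f := fun m : ℕ => (m : ℂ))
      (Nat.cast_injective)
    intro m
    simp only [Set.mem_setOf_eq, IsRoot, eval_sub, eval_C, hnat m, sub_self]
  have h1 : p = C (p.eval 0) := by
    have := sub_eq_zero.mp hq
    exact this
  intro c c'
  rw [h1, eval_C, eval_C]

open Polynomial in
lemma exists_poly (n : ℕ) (a : ℂ) :
    ∃ p : Polynomial ℂ, ∀ c : ℂ, p.eval c = Tsum n a c - Rsum n a c := by
  refine ⟨(∑ k ∈ Finset.range (n+1), C ((-1:ℂ)^k * (n.choose k : ℂ) * poch (a + k) k) *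
      ∏ i ∈ Finset.range (n - k), (X + C ((k:ℂ) + i))) -
    C ((-1:ℂ)^n) * ∑ k ∈ Finset.range (n+1), C ((-1:ℂ)^k * (n.choose k : ℂ)) *
      (∏ i ∈ Finset.range k, (C 2 * X + C (-a - (n:ℂ) - 1 + k + i))) *
      (∏ i ∈ Finset.range (n - k), (X + C ((k:ℂ) + i))), ?_⟩
  intro c
  rw [eval_sub, eval_mul, eval_C, Tsum, Rsum, Tsum]
  congr 1
  · rw [eval_finset_sum]
    apply Finset.sum_congr rfl
    intro k _
    rw [eval_mul, eval_C, eval_prod, poch]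
    congr 1
    apply Finset.prod_congr rfl
    intro i _
    rw [eval_add, eval_X, eval_C]; ring
  · rw [eval_finset_sum, Finset.mul_sum, Finset.mul_sum]
    apply Finset.sum_congr rfl
    intro k _
    rw [eval_mul, eval_mul, eval_C, eval_prod, eval_prod, poch, poch]
    have h1 : (∏ i ∈ Finset.range k, eval c (C 2 * X + C (-a - (n:ℂ) - 1 + k + i))) =
        ∏ i ∈ Finset.range k, ((2*c - a - (n:ℂ) - 1 + k) + i) := by
      apply Finset.prod_congr rfl
      intro i _
      rw [eval_add, eval_mul, eval_C, eval_X, eval_C]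
      ring
    have h2 : (∏ i ∈ Finset.range (n-k), eval c (X + C ((k:ℂ) + i))) =
        ∏ i ∈ Finset.range (n-k), ((c + k) + i) := by
      apply Finset.prod_congr rfl
      intro i _
      rw [eval_add, eval_X, eval_C]
      ring
    rw [h1, h2]

theorem Tsum_eq_Rsum : ∀ n, ∀ a c : ℂ, Tsum n a c = Rsum n a c := by
  intro n
  induction n with
  | zero => intro a c; rw [Tsum_zero, Rsum_zero]
  | succ m ih =>
    intro a c
    obtain ⟨p, hp⟩ := exists_poly (m+1) a
    have hper : ∀ c : ℂ, p.eval (c+1) = p.eval c := by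
      intro c
      rw [hp, hp]
      have h1 := Tsum_R2 m a c
      have h2 := Rsum_R2 m a c
      have h3 := ih a (c+1)
      linear_combination -h1 + h2 - (-((m:ℂ)+1)) * h3
    have hval := poly_periodic_const p hper c (1 - ((m+1:ℕ):ℂ))
    rw [hp, hp] at hval
    have hT := Tsum_collapse (m+1) a
    have hR := Rsum_collapse (m+1) a
    have : Tsum (m+1) a (1 - ((m+1:ℕ):ℂ)) - Rsum (m+1) a (1 - ((m+1:ℕ):ℂ)) = 0 := by
      rw [hT, hR, sub_self]
    rw [this] at hval
    linear_combination hval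

lemma term_eq (n k : ℕ) (hkn : k ≤ n) (x c : ℂ) (hx : poch x n ≠ 0) (hc : poch c n ≠ 0) :
    (poch (-(n:ℂ)) k * poch (x/2) k * poch ((x+1)/2) k) /
        ((Nat.factorial k : ℂ) * poch x k * poch c k) * (4:ℂ)^k * poch c n
    = (-1)^k * (n.choose k : ℂ) * poch (x + k) k * poch (c + k) (n - k) := by
  have hxk : poch x k ≠ 0 := poch_ne_zero_of_le hx hkn
  have hck : poch c k ≠ 0 := poch_ne_zero_of_le hc hkn
  have hfk : (Nat.factorial k : ℂ) ≠ 0 := Nat.cast_ne_zero.mpr (Nat.factorial_ne_zero k)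
  have hsplitc : poch c n = poch c k * poch (c + k) (n - k) := by
    rw [← poch_add]; congr 1; omega
  have hdup : poch (x/2) k * poch ((x+1)/2) k * 4^k = poch x k * poch (x + k) k := by
    rw [poch_dup x k, ← poch_add]; congr 1; omega
  have hneg := poch_neg_nat n k hkn
  rw [hsplitc, hneg]
  field_simp
  linear_combination (n.choose k : ℂ) *
    poch (c + k) (n - k) * hdup

theorem stmt_9 (n : ℕ) (a c : ℂ)
    (ha : poch a n ≠ 0) (hc : poch c n ≠ 0)
    (h2c : poch (2 * c - a - (n : ℂ) - 1) n ≠ 0) :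
    ∑ k ∈ range (n + 1),
      (poch (-(n : ℂ)) k * poch (a / 2) k * poch ((a + 1) / 2) k) /
        ((Nat.factorial k : ℂ) * poch a k * poch c k) * (4 : ℂ) ^ k
    = (-1 : ℂ) ^ n *
      ∑ k ∈ range (n + 1),
        (poch (-(n : ℂ)) k * poch ((2 * c - a - (n : ℂ) - 1) / 2) k *
          poch ((2 * c - a - (n : ℂ)) / 2) k) /
          ((Nat.factorial k : ℂ) * poch (2 * c - a - (n : ℂ) - 1) k * poch c k) *
          (4 : ℂ) ^ k := by
  set b : ℂ := 2 * c - a - (n:ℂ) - 1 with hb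
  have he : (2 * c - a - (n : ℂ)) / 2 = (b + 1) / 2 := by rw [hb]; ring
  rw [he]
  apply mul_right_cancel₀ hc
  have hL : (∑ k ∈ Finset.range (n + 1),
      (poch (-(n : ℂ)) k * poch (a / 2) k * poch ((a + 1) / 2) k) /
        ((Nat.factorial k : ℂ) * poch a k * poch c k) * (4 : ℂ) ^ k) * poch c n
      = Tsum n a c := by
    rw [Finset.sum_mul, Tsum]
    exact Finset.sum_congr rfl fun k hk =>
      term_eq n k (Nat.lt_succ_iff.mp (Finset.mem_range.mp hk)) a c ha hc
  have hR : (∑ k ∈ Finset.range (n + 1),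
      (poch (-(n : ℂ)) k * poch (b / 2) k * poch ((b + 1) / 2) k) /
        ((Nat.factorial k : ℂ) * poch b k * poch c k) * (4 : ℂ) ^ k) * poch c n
      = Tsum n b c := by
    rw [Finset.sum_mul, Tsum]
    exact Finset.sum_congr rfl fun k hk =>
      term_eq n k (Nat.lt_succ_iff.mp (Finset.mem_range.mp hk)) b c h2c hc
  rw [hL]
  have hmain := Tsum_eq_Rsum n a c
  rw [Rsum] at hmain
  rw [show (2 * c - a - (n:ℂ) - 1) = b from rfl] at hmain
  calc Tsum n a c = (-1)^n * Tsum n b c := hmain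
    _ = (-1)^n * ((∑ k ∈ Finset.range (n + 1),
          (poch (-(n : ℂ)) k * poch (b / 2) k * poch ((b + 1) / 2) k) /
            ((Nat.factorial k : ℂ) * poch b k * poch c k) * (4 : ℂ) ^ k) * poch c n) := by
        rw [hR]
    _ = ((-1:ℂ)^n * ∑ k ∈ Finset.range (n + 1),
          (poch (-(n : ℂ)) k * poch (b / 2) k * poch ((b + 1) / 2) k) /
            ((Nat.factorial k : ℂ) * poch b k * poch c k) * (4 : ℂ) ^ k) * poch c n := by
        ring
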